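/- Let K = F_{2^m}, σ(x) = x^{2^k} with gcd(k,m) = 1, and α₁, α₂ ∈ K. Put f_α(x,y) = x^{σ+1} + x y^σ + α y^{σ+1}. If a ∈ K* and c₁, c₂, c₃, c₄ ∈ K with d := c₁c₄ + c₂c₃ ≠ 0 satisfy a · f_{α₁}(c₁x + c₂y, c₃x + c₄y) = f_{α₂}(x,y) for all x, y ∈ K, then d^{σ+1} · a² · α₁ = α₂; in particular, for fixed c₁, c₂, c₃, c₄ (with α₁ ≠ 0) the scalar a is uniquely determined. -/

import Mathlib

/-- The biprojective polynomial `f_α(x,y) = x^(σ+1) + x y^σ + α y^(σ+1)`,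
where `σ : x ↦ x^(2^k)`. -/
noncomputable def fpoly {m : ℕ} (k : ℕ) (α x y : GaloisField 2 m) : GaloisField 2 m :=
  x ^ (2 ^ k + 1) + x * y ^ (2 ^ k) + α * y ^ (2 ^ k + 1)

lemma pow_pow_self {K : Type*} [Monoid K] {q : ℕ} (hq : ∀ x : K, x ^ q = x)
    (n : ℕ) : ∀ x : K, x ^ q ^ n = x := by
  induction n with
  | zero => intro x; simp
  | succ n ih =>
    intro x
    rw [pow_succ, pow_mul, hq (x ^ q ^ n), ih]

lemma key (m k : ℕ) (hm : 0 < m) (hk : 0 < k) (hkm : Nat.gcd k m = 1)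
    (α₁ α₂ : GaloisField 2 m) (a c₁ c₂ c₃ c₄ : GaloisField 2 m)
    (ha : a ≠ 0) (hdet : c₁ * c₄ + c₂ * c₃ ≠ 0)
    (hf : ∀ x y : GaloisField 2 m,
      a * fpoly k α₁ (c₁ * x + c₂ * y) (c₃ * x + c₄ * y) = fpoly k α₂ x y) :
    (c₁ * c₄ + c₂ * c₃) ^ (2 ^ k + 1) * a ^ 2 * α₁ = α₂ := by
  have htwo : (2 : GaloisField 2 m) = 0 := CharP.cast_eq_zero (GaloisField 2 m) 2
  have hfrob : ∀ x y : GaloisField 2 m,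
      (x + y) ^ 2 ^ k = x ^ 2 ^ k + y ^ 2 ^ k := fun x y => add_pow_char_pow x y 2 k
  have hexp : ∀ x y : GaloisField 2 m,
      a * ((c₁ ^ 2 ^ k * x ^ 2 ^ k + c₂ ^ 2 ^ k * y ^ 2 ^ k) * (c₁ * x + c₂ * y)
        + (c₁ * x + c₂ * y) * (c₃ ^ 2 ^ k * x ^ 2 ^ k + c₄ ^ 2 ^ k * y ^ 2 ^ k)
        + α₁ * ((c₃ ^ 2 ^ k * x ^ 2 ^ k + c₄ ^ 2 ^ k * y ^ 2 ^ k) * (c₃ * x + c₄ * y)))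
      = x ^ 2 ^ k * x + x * y ^ 2 ^ k + α₂ * (y ^ 2 ^ k * y) := by
    intro x y
    have h := hf x y
    simp only [fpoly, pow_succ, hfrob, mul_pow] at h
    linear_combination h
  have h1 : a * (c₁ ^ 2 ^ k * c₁ + c₁ * c₃ ^ 2 ^ k + α₁ * (c₃ ^ 2 ^ k * c₃)) = 1 := by
    have h := hexp 1 0
    simp only [one_pow, zero_pow (pow_ne_zero k (two_ne_zero)), mul_one, mul_zero,
      add_zero, zero_mul, zero_add] at h
    linear_combination h
  have h2 : a * (c₂ ^ 2 ^ k * c₂ + c₂ * c₄ ^ 2 ^ k + α₁ * (c₄ ^ 2 ^ k * c₄)) = α₂ := by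
    have h := hexp 0 1
    simp only [one_pow, zero_pow (pow_ne_zero k (two_ne_zero)), mul_one, mul_zero,
      add_zero, zero_mul, zero_add] at h
    linear_combination h
  -- β + γ = 1
  have r1 : a * (c₁ ^ 2 ^ k * c₂ + c₂ * c₃ ^ 2 ^ k + α₁ * (c₃ ^ 2 ^ k * c₄))
      + a * (c₁ * c₂ ^ 2 ^ k + c₁ * c₄ ^ 2 ^ k + α₁ * (c₃ * c₄ ^ 2 ^ k)) = 1 := by
    have h := hexp 1 1
    simp only [one_pow, mul_one] at h
    linear_combination h - h1 - h2
  have r3 : ∀ x : GaloisField 2 m,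
      (a * (c₁ ^ 2 ^ k * c₂ + c₂ * c₃ ^ 2 ^ k + α₁ * (c₃ ^ 2 ^ k * c₄))) * (x ^ 2 ^ k - x)
        = 0 := by
    intro x
    have h := hexp x 1
    simp only [one_pow, mul_one] at h
    linear_combination h - (x ^ 2 ^ k * x) * h1 - h2 - x * r1
  by_cases hβ : a * (c₁ ^ 2 ^ k * c₂ + c₂ * c₃ ^ 2 ^ k + α₁ * (c₃ ^ 2 ^ k * c₄)) = 0
  · -- main case
    rw [pow_succ, hfrob, mul_pow, mul_pow]
    linear_combination (a * (c₂ ^ 2 ^ k * c₂ + c₂ * c₄ ^ 2 ^ k + α₁ * (c₄ ^ 2 ^ k * c₄))) * h1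
      + h2 + (a * (c₁ * c₂ ^ 2 ^ k + c₁ * c₄ ^ 2 ^ k + α₁ * (c₃ * c₄ ^ 2 ^ k))) * hβ
      - (a ^ 2 * (c₁ * c₂ * (c₃ ^ 2 ^ k * c₄ ^ 2 ^ k + c₂ ^ 2 ^ k * c₃ ^ 2 ^ k
          + c₁ ^ 2 ^ k * c₄ ^ 2 ^ k + c₁ ^ 2 ^ k * c₂ ^ 2 ^ k)
        + α₁ * (c₂ * c₃ + c₁ * c₄) * (c₃ ^ 2 ^ k * c₄ ^ 2 ^ k)
        + α₁ ^ 2 * (c₃ * c₄ * (c₃ ^ 2 ^ k * c₄ ^ 2 ^ k)))) * htwo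
  · -- degenerate case: x^q = x for all x, so the field is 𝔽₂
    have hq : ∀ x : GaloisField 2 m, x ^ 2 ^ k = x := by
      intro x
      have := r3 x
      rcases mul_eq_zero.mp this with h | h
      · exact absurd h hβ
      · exact sub_eq_zero.mp h
    have hcard : ∀ x : GaloisField 2 m, x ^ 2 ^ m = x := by
      intro x
      have : Fintype (GaloisField 2 m) := Fintype.ofFinite _
      have hc : Fintype.card (GaloisField 2 m) = 2 ^ m := by
        rw [← Nat.card_eq_fintype_card, GaloisField.card 2 m hm.ne']
      calc x ^ 2 ^ m = x ^ Fintype.card (GaloisField 2 m) := by rw [hc]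
        _ = x := FiniteField.pow_card x
    -- derive x^2 = x for all x
    have hsq : ∀ x : GaloisField 2 m, x ^ 2 = x := by
      rcases eq_or_lt_of_le (show 1 ≤ m from hm) with hm1 | hm1
      · intro x
        have h2m : (2:ℕ) ^ m = 2 := by rw [← hm1]; rfl
        have := hcard x
        rwa [h2m] at this
      · obtain ⟨u, -, hu⟩ := Nat.exists_mul_mod_eq_one_of_coprime hkm hm1
        intro x
        have h1x : x ^ 2 ^ (k * u) = x := by
          rw [pow_mul 2 k u]; exact pow_pow_self hq u x
        have hdiv : k * u = m * (k * u / m) + 1 := by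
          conv_lhs => rw [← Nat.div_add_mod (k * u) m, hu]
        have h2x : x ^ 2 ^ (k * u) = x ^ 2 := by
          rw [hdiv, pow_succ 2 (m * (k * u / m)), pow_mul x, pow_mul 2 m (k * u / m),
            pow_pow_self hcard]
        rw [← h2x, h1x]
    have zero_or_one : ∀ x : GaloisField 2 m, x = 0 ∨ x = 1 := by
      intro x
      have : x * (x - 1) = 0 := by linear_combination hsq x
      rcases mul_eq_zero.mp this with h | h
      · exact Or.inl h
      · exact Or.inr (by linear_combination h)
    have ha1 : a = 1 := by
      rcases zero_or_one a with h | h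
      · exact absurd h ha
      · exact h
    -- rewrite the hypotheses using hq
    rw [hq c₁, hq c₃, ha1] at h1
    rw [hq c₂, hq c₄, ha1] at h2
    rw [hq c₁, hq c₂, hq c₃, hq c₄, ha1] at r1
    have hz : ∀ z : GaloisField 2 m, z ^ (2 ^ k + 1) = z := by
      intro z; rw [pow_succ, hq z, ← sq, hsq z]
    rw [hz, ha1]
    have hd1 : c₁ * c₄ + c₂ * c₃ = 1 := by
      linear_combination r1 - (c₁ * c₂ + α₁ * (c₃ * c₄)) * htwo
    rcases zero_or_one c₃ with h3 | h3
    · -- c₃ = 0 : c₁ = 1, c₄ = 1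
      rw [h3] at h1 hd1
      have hc1 : c₁ = 1 := by linear_combination h1 - hsq c₁
      rw [hc1] at hd1
      have hc4 : c₄ = 1 := by linear_combination hd1
      linear_combination (c₄ * α₁) * hc1 + (c₂ * α₁) * h3 + h2 - hsq c₂
        + (-(α₁ * c₄) - c₂) * hc4 - c₂ * htwo
    · rw [h3] at h1 hd1
      have hα1 : α₁ = 1 := by linear_combination h1 - hsq c₁ - c₁ * htwo
      linear_combination (c₂ * α₁) * h3 + (c₁ * c₄ + c₂ - c₄ ^ 2) * hα1 + h2 - hsq c₂
        + (c₁ - 1) * hsq c₄ - c₄ * hd1 + (c₁ * c₄ - c₄) * htwo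

/-- If `(a, M)` moves `f_{α₁}` to `f_{α₂}` and `d = det M`, then
`d^(σ+1) a² α₁ = α₂`; in particular (when `α₁ ≠ 0`) the scalar `a` is uniquely
determined by the matrix entries. -/
theorem stmt_5 (m k : ℕ) (hm : 0 < m) (hk : 0 < k) (hkm : Nat.gcd k m = 1)
    (α₁ α₂ : GaloisField 2 m) (a c₁ c₂ c₃ c₄ : GaloisField 2 m)
    (ha : a ≠ 0) (hdet : c₁ * c₄ + c₂ * c₃ ≠ 0)
    (hf : ∀ x y : GaloisField 2 m,
      a * fpoly k α₁ (c₁ * x + c₂ * y) (c₃ * x + c₄ * y) = fpoly k α₂ x y) :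
    (c₁ * c₄ + c₂ * c₃) ^ (2 ^ k + 1) * a ^ 2 * α₁ = α₂ ∧
      (α₁ ≠ 0 → ∀ a' : GaloisField 2 m, a' ≠ 0 →
        (∀ x y : GaloisField 2 m,
          a' * fpoly k α₁ (c₁ * x + c₂ * y) (c₃ * x + c₄ * y) = fpoly k α₂ x y) →
        a' = a) := by
  have hkey := key m k hm hk hkm α₁ α₂ a c₁ c₂ c₃ c₄ ha hdet hf
  refine ⟨hkey, fun hα₁ a' ha' hf' => ?_⟩
  have hkey' := key m k hm hk hkm α₁ α₂ a' c₁ c₂ c₃ c₄ ha' hdet hf'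
  have hd : (c₁ * c₄ + c₂ * c₃) ^ (2 ^ k + 1) ≠ 0 := pow_ne_zero _ hdet
  have hsq : a' ^ 2 = a ^ 2 := by
    have h := hkey'.trans hkey.symm
    exact mul_left_cancel₀ hd (mul_right_cancel₀ hα₁ h)
  have htwo : (2 : GaloisField 2 m) = 0 := CharP.cast_eq_zero (GaloisField 2 m) 2
  have hz : (a' - a) ^ 2 = 0 := by
    linear_combination hsq + (a ^ 2 - a' * a) * htwo
  have := pow_eq_zero_iff (two_ne_zero) |>.mp hz
  exact sub_eq_zero.mp this
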